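/- For the representative point A = (A₀, 0, 0, 0) with A₀ > 0, and B = diag(B₀, −B₁, −B₂, −B₃) with B₀ > B₁ > B₂ > B₃ (all distinct), the critical points of V on the forward light cone are exactly r₀ = A₀/(B₀−B_i), n = ±e_i for i = 1,2,3 (six points), and the global minimum value is attained precisely at the two points with n = ±e₁ (the direction of the largest B_i, here B₁ being the largest among B₁,B₂,B₃ requires B₁ > B₂, B₃), where V = −A₀²/(2(B₀−B₁)). -/

import Mathlib

open Matrix

/-- The Minkowski metric diag(1,−1,−1,−1). -/
noncomputable def eta : Matrix (Fin 4) (Fin 4) ℝ :=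
  Matrix.diagonal ![1, -1, -1, -1]

set_option maxHeartbeats 1000000 in
/-- for A = (A₀,0,0,0), A₀ > 0, and B = diag(B₀,−B₁,−B₂,−B₃) with
B₀ > B₁ > B₂ > B₃, the critical points of V on the forward light cone are exactly
the six points with r₀ = A₀/(B₀−Bᵢ), n = ±eᵢ, and the global minimum value
−A₀²/(2(B₀−B₁)) is attained precisely at the two points with n = ±e₁. -/
theorem stmt13 (A₀ : ℝ) (hA₀ : 0 < A₀) (B₀ B₁ B₂ B₃ : ℝ)
    (h01 : B₁ < B₀) (h12 : B₂ < B₁) (h23 : B₃ < B₂) :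
    let Bs : Fin 3 → ℝ := ![B₁, B₂, B₃]
    let A : Fin 4 → ℝ := ![A₀, 0, 0, 0]
    let Bup : Matrix (Fin 4) (Fin 4) ℝ := Matrix.diagonal ![B₀, -B₁, -B₂, -B₃]
    let V : (Fin 4 → ℝ) → ℝ := fun r =>
      -((eta.mulVec A) ⬝ᵥ r) + (1 / 2 : ℝ) * (r ⬝ᵥ (eta * Bup * eta).mulVec r)
    let cone : Set (Fin 4 → ℝ) :=
      {r | 0 ≤ r 0 ∧ (r 0) ^ 2 = (r 1) ^ 2 + (r 2) ^ 2 + (r 3) ^ 2}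
    let pt : Fin 3 → ℝ → (Fin 4 → ℝ) := fun i s =>
      fun μ => if μ = 0 then A₀ / (B₀ - Bs i)
        else if μ = i.succ then s * (A₀ / (B₀ - Bs i)) else 0
    -- the critical points on the punctured cone are exactly the six points pt i (±1)
    ({r : Fin 4 → ℝ | 0 < r 0 ∧ r ⬝ᵥ eta.mulVec r = 0 ∧
        ∃ lam : ℝ, (eta * Bup * eta).mulVec r - lam • eta.mulVec r = eta.mulVec A}
      = {r | ∃ (i : Fin 3) (s : ℝ), (s = 1 ∨ s = -1) ∧ r = pt i s}) ∧
    -- the global minimum value is −A₀²/(2(B₀−B₁)) ...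
    (∀ r ∈ cone, -A₀ ^ 2 / (2 * (B₀ - B₁)) ≤ V r) ∧
    -- ... attained precisely at the two points pt 0 (±1)
    (∀ r ∈ cone, (V r = -A₀ ^ 2 / (2 * (B₀ - B₁)) ↔ r = pt 0 1 ∨ r = pt 0 (-1))) := by
  intro Bs A Bup V cone pt
  have h02 : B₂ < B₀ := h12.trans h01
  have h03 : B₃ < B₀ := h23.trans h02
  have h13 : B₃ < B₁ := h23.trans h12
  have hp1 : (0:ℝ) < B₀ - B₁ := by linarith
  have hp2 : (0:ℝ) < B₀ - B₂ := by linarith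
  have hp3 : (0:ℝ) < B₀ - B₃ := by linarith
  have hsc0 : Fin.succ (0:Fin 3) = (1:Fin 4) := rfl
  have hsc1 : Fin.succ (1:Fin 3) = (2:Fin 4) := rfl
  have hsc2 : Fin.succ (2:Fin 3) = (3:Fin 4) := rfl
  have hBup : eta * Bup * eta = Bup := by
    ext i j
    fin_cases i <;> fin_cases j <;>
      simp [eta, Bup, Matrix.mul_apply, Fin.sum_univ_four, Matrix.diagonal]
  -- auxiliary: V in coordinates
  have hVval : ∀ r : Fin 4 → ℝ, V r = -(A₀ * r 0) + (1/2 : ℝ) *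
      (B₀ * r 0 * r 0 - B₁ * r 1 * r 1 - B₂ * r 2 * r 2 - B₃ * r 3 * r 3) := by
    intro r
    simp only [V, hBup, Bup, A]
    simp [eta, Matrix.mulVec_diagonal, dotProduct, Fin.sum_univ_four]
    ring
  refine ⟨?_, ?_, ?_⟩
  · -- the critical point set
    ext r
    simp only [Set.mem_setOf_eq]
    constructor
    · rintro ⟨hr0, hcone, lam, heq⟩
      rw [hBup] at heq
      have e0 := congrFun heq 0
      have e1 := congrFun heq 1
      have e2 := congrFun heq 2
      have e3 := congrFun heq 3
      simp only [Bup, A] at e0 e1 e2 e3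
      simp [eta, Matrix.mulVec_diagonal] at e0 e1 e2 e3
      simp [eta, Matrix.mulVec_diagonal, dotProduct, Fin.sum_univ_four] at hcone
      have f1 : lam = B₁ ∨ r 1 = 0 := by
        rcases mul_eq_zero.1 (show (lam - B₁) * r 1 = 0 by linear_combination e1) with h | h
        · exact Or.inl (by linarith)
        · exact Or.inr h
      have f2 : lam = B₂ ∨ r 2 = 0 := by
        rcases mul_eq_zero.1 (show (lam - B₂) * r 2 = 0 by linear_combination e2) with h | h
        · exact Or.inl (by linarith)
        · exact Or.inr h
      have f3 : lam = B₃ ∨ r 3 = 0 := by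
        rcases mul_eq_zero.1 (show (lam - B₃) * r 3 = 0 by linear_combination e3) with h | h
        · exact Or.inl (by linarith)
        · exact Or.inr h
      rcases f1 with hl1 | hz1
      · -- lam = B₁, so r2 = r3 = 0
        have hz2 : r 2 = 0 := by
          rcases f2 with h | h
          · exfalso; rw [hl1] at h; linarith
          · exact h
        have hz3 : r 3 = 0 := by
          rcases f3 with h | h
          · exfalso; rw [hl1] at h; linarith
          · exact h
        have ht : r 0 = A₀ / (B₀ - B₁) := by
          field_simp
          linear_combination e0 + r 0 * hl1
        have hsq : (r 1 - r 0) * (r 1 + r 0) = 0 := by linear_combination -hcone - r 2 * hz2 - r 3 * hz3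
        refine ⟨0, r 1 / r 0, ?_, ?_⟩
        · rcases mul_eq_zero.1 hsq with h | h
          · left; rw [sub_eq_zero] at h; rw [h]; exact div_self (ne_of_gt hr0)
          · right; rw [eq_neg_of_add_eq_zero_left h, neg_div, div_self (ne_of_gt hr0)]
        · funext μ
          fin_cases μ <;>
            simp only [pt, Bs] <;> norm_num [hsc0, hsc1, hsc2]
          · exact ht
          · rw [← ht]; field_simp; try rfl
          · exact hz2
          · exact hz3
      rcases f2 with hl2 | hz2
      · -- lam = B₂, r1 = 0, r3 = 0
        have hz3 : r 3 = 0 := by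
          rcases f3 with h | h
          · exfalso; rw [hl2] at h; linarith
          · exact h
        have ht : r 0 = A₀ / (B₀ - B₂) := by
          field_simp
          linear_combination e0 + r 0 * hl2
        have hsq : (r 2 - r 0) * (r 2 + r 0) = 0 := by linear_combination -hcone - r 1 * hz1 - r 3 * hz3
        refine ⟨1, r 2 / r 0, ?_, ?_⟩
        · rcases mul_eq_zero.1 hsq with h | h
          · left; rw [sub_eq_zero] at h; rw [h]; exact div_self (ne_of_gt hr0)
          · right; rw [eq_neg_of_add_eq_zero_left h, neg_div, div_self (ne_of_gt hr0)]
        · funext μ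
          fin_cases μ <;>
            simp only [pt, Bs] <;> norm_num [hsc0, hsc1, hsc2]
          · exact ht
          · exact hz1
          · rw [← ht]; field_simp; try rfl
          · exact hz3
      rcases f3 with hl3 | hz3
      · -- lam = B₃, r1 = r2 = 0
        have ht : r 0 = A₀ / (B₀ - B₃) := by
          field_simp
          linear_combination e0 + r 0 * hl3
        have hsq : (r 3 - r 0) * (r 3 + r 0) = 0 := by linear_combination -hcone - r 1 * hz1 - r 2 * hz2
        refine ⟨2, r 3 / r 0, ?_, ?_⟩
        · rcases mul_eq_zero.1 hsq with h | h
          · left; rw [sub_eq_zero] at h; rw [h]; exact div_self (ne_of_gt hr0)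
          · right; rw [eq_neg_of_add_eq_zero_left h, neg_div, div_self (ne_of_gt hr0)]
        · funext μ
          fin_cases μ <;>
            simp only [pt, Bs] <;> norm_num [hsc0, hsc1, hsc2]
          · exact ht
          · exact hz1
          · exact hz2
          · split_ifs with hh
            · show r 3 = r 3 / r 0 * (A₀ / (B₀ - B₃)); rw [← ht, div_mul_cancel₀ _ (ne_of_gt hr0)]
            · exact absurd rfl hh
      · -- all spatial components zero: contradiction with r0 > 0 and the cone
        exfalso
        nlinarith [hcone, hz1, hz2, hz3]
    · rintro ⟨i, s, hs, rfl⟩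
      fin_cases i <;> rcases hs with rfl | rfl <;>
        refine ⟨by simp [pt, Bs]; positivity, ?_, ?_⟩ <;>
        simp only [pt, Bs, Bup, A, hBup]
      case _ => simp [eta, Matrix.mulVec_diagonal, dotProduct, Fin.sum_univ_four, hsc0, hsc1, hsc2]; try ring
      case _ =>
        exact ⟨B₁, by funext μ; fin_cases μ <;> simp [eta, Matrix.mulVec_diagonal, hsc0, hsc1, hsc2] <;> (try field_simp) <;> (try ring)⟩
      case _ => simp [eta, Matrix.mulVec_diagonal, dotProduct, Fin.sum_univ_four, hsc0, hsc1, hsc2]; try ring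
      case _ =>
        exact ⟨B₁, by funext μ; fin_cases μ <;> simp [eta, Matrix.mulVec_diagonal, hsc0, hsc1, hsc2] <;> (try field_simp) <;> (try ring)⟩
      case _ => simp [eta, Matrix.mulVec_diagonal, dotProduct, Fin.sum_univ_four, hsc0, hsc1, hsc2]; try ring
      case _ =>
        exact ⟨B₂, by funext μ; fin_cases μ <;> simp [eta, Matrix.mulVec_diagonal, hsc0, hsc1, hsc2] <;> (try field_simp) <;> (try ring)⟩
      case _ => simp [eta, Matrix.mulVec_diagonal, dotProduct, Fin.sum_univ_four, hsc0, hsc1, hsc2]; try ring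
      case _ =>
        exact ⟨B₂, by funext μ; fin_cases μ <;> simp [eta, Matrix.mulVec_diagonal, hsc0, hsc1, hsc2] <;> (try field_simp) <;> (try ring)⟩
      case _ => simp [eta, Matrix.mulVec_diagonal, dotProduct, Fin.sum_univ_four, hsc0, hsc1, hsc2]; try ring
      case _ =>
        exact ⟨B₃, by funext μ; fin_cases μ <;> simp [eta, Matrix.mulVec_diagonal, hsc0, hsc1, hsc2] <;> (try field_simp) <;> (try ring)⟩
      case _ => simp [eta, Matrix.mulVec_diagonal, dotProduct, Fin.sum_univ_four, hsc0, hsc1, hsc2]; try ring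
      case _ =>
        exact ⟨B₃, by funext μ; fin_cases μ <;> simp [eta, Matrix.mulVec_diagonal, hsc0, hsc1, hsc2] <;> (try field_simp) <;> (try ring)⟩
  · -- global lower bound
    rintro r ⟨h0, hc⟩
    rw [hVval r, div_le_iff₀ (by positivity : (0:ℝ) < 2 * (B₀ - B₁))]
    have key : (-(A₀ * r 0) + (1/2:ℝ) * (B₀ * r 0 * r 0 - B₁ * r 1 * r 1 - B₂ * r 2 * r 2 - B₃ * r 3 * r 3))
          * (2 * (B₀ - B₁)) + A₀ ^ 2
        = ((B₀ - B₁) * r 0 - A₀) ^ 2 + (B₀ - B₁) * ((B₁ - B₂) * (r 2) ^ 2 + (B₁ - B₃) * (r 3) ^ 2) := by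
      linear_combination (B₀ - B₁) * B₁ * hc
    linarith [key, sq_nonneg ((B₀ - B₁) * r 0 - A₀),
      mul_nonneg (mul_nonneg hp1.le (by linarith : (0:ℝ) ≤ B₁ - B₂)) (sq_nonneg (r 2)),
      mul_nonneg (mul_nonneg hp1.le (by linarith : (0:ℝ) ≤ B₁ - B₃)) (sq_nonneg (r 3))]
  · -- equality exactly at pt 0 (±1)
    rintro r ⟨h0, hc⟩
    constructor
    · intro hV
      rw [hVval r] at hV
      have key : ((B₀ - B₁) * r 0 - A₀)^2 + (B₀ - B₁) * ((B₁ - B₂) * (r 2)^2 + (B₁ - B₃) * (r 3)^2) = 0 := by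
        have h2 : (-(A₀ * r 0) + (1/2 : ℝ) *
            (B₀ * r 0 * r 0 - B₁ * r 1 * r 1 - B₂ * r 2 * r 2 - B₃ * r 3 * r 3))
            * (2 * (B₀ - B₁)) = -A₀^2 := by
          rw [hV]; field_simp
        linear_combination h2 - (B₀ - B₁) * B₁ * hc
      have hz2 : r 2 = 0 := by
        have h5 : (r 2)^2 ≤ 0 := by
          nlinarith [key, sq_nonneg ((B₀ - B₁) * r 0 - A₀),
            mul_nonneg (mul_nonneg hp1.le (by linarith : (0:ℝ) ≤ B₁ - B₃)) (sq_nonneg (r 3)),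
            mul_pos hp1 (show (0:ℝ) < B₁ - B₂ by linarith)]
        exact pow_eq_zero_iff (by norm_num) |>.1 (le_antisymm h5 (sq_nonneg _))
      have hz3 : r 3 = 0 := by
        have h5 : (r 3)^2 ≤ 0 := by
          nlinarith [key, sq_nonneg ((B₀ - B₁) * r 0 - A₀),
            mul_nonneg (mul_nonneg hp1.le (by linarith : (0:ℝ) ≤ B₁ - B₂)) (sq_nonneg (r 2)),
            mul_pos hp1 (show (0:ℝ) < B₁ - B₃ by linarith)]
        exact pow_eq_zero_iff (by norm_num) |>.1 (le_antisymm h5 (sq_nonneg _))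
      have ht : r 0 = A₀ / (B₀ - B₁) := by
        rw [hz2, hz3] at key
        norm_num at key
        have h4 : (B₀ - B₁) * r 0 - A₀ = 0 := by linear_combination key
        field_simp
        linear_combination h4
      have hsq : (r 1 - r 0) * (r 1 + r 0) = 0 := by
        linear_combination -hc - r 2 * hz2 - r 3 * hz3
      rcases mul_eq_zero.1 hsq with h | h
      · left
        funext μ
        fin_cases μ <;> simp only [pt, Bs] <;> norm_num [hsc0, hsc1, hsc2]
        · exact ht
        · rw [← ht]; linarith
        · exact hz2
        · exact hz3
      · right
        funext μ
        fin_cases μ <;> simp only [pt, Bs] <;> norm_num [hsc0, hsc1, hsc2]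
        · exact ht
        · rw [← ht]; linarith
        · exact hz2
        · exact hz3
    · rintro (rfl | rfl) <;>
      · rw [hVval]
        simp [pt, Bs, hsc0, hsc1, hsc2]
        field_simp [hp1.ne']
        ring
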